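/- Let (Ω, ℱ, P) be a probability space, S a measurable space, and k : S × S → ℝ a bounded, measurable, symmetric kernel. Let m, n ≥ 2, let X_1, …, X_m be random variables with values in S each with law μ, let Y_1, …, Y_n be random variables with values in S each with law ν, and assume the family (X_1, …, X_m, Y_1, …, Y_n) is mutually independent. Then E[ (1/(m(m−1))) ∑_{i ≠ i'} k(X_i, X_{i'}) + (1/(n(n−1))) ∑_{j ≠ j'} k(Y_j, Y_{j'}) − (2/(mn)) ∑_{i=1}^m ∑_{j=1}^n k(X_i, Y_j) ] = MMD_k²(μ, ν); that is, the empirical estimator of the squared MMD is unbiased. -/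

import Mathlib

open MeasureTheory ProbabilityTheory

lemma key_int {Ω S : Type*} [MeasurableSpace Ω] [MeasurableSpace S]
    (P : Measure Ω) [IsProbabilityMeasure P]
    (k : S → S → ℝ) (hk_meas : Measurable fun p : S × S => k p.1 p.2)
    (M : ℝ) (hM : ∀ x y, |k x y| ≤ M)
    {f g : Ω → S} (hf : Measurable f) (hg : Measurable g) :
    Integrable (fun ω => k (f ω) (g ω)) P := by
  refine (integrable_const M).mono' ((hk_meas.comp (hf.prodMk hg)).aestronglyMeasurable)
    (Filter.Eventually.of_forall fun ω => ?_)
  simpa using hM (f ω) (g ω)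

lemma key_eq {Ω S : Type*} [MeasurableSpace Ω] [MeasurableSpace S]
    (P : Measure Ω) [IsProbabilityMeasure P]
    (k : S → S → ℝ) (hk_meas : Measurable fun p : S × S => k p.1 p.2)
    (M : ℝ) (hM : ∀ x y, |k x y| ≤ M)
    {f g : Ω → S} (hf : Measurable f) (hg : Measurable g)
    (hfg : IndepFun f g P) :
    ∫ ω, k (f ω) (g ω) ∂P = ∫ x, ∫ y, k x y ∂(P.map g) ∂(P.map f) := by
  have hmap : P.map (fun ω => (f ω, g ω)) = (P.map f).prod (P.map g) :=
    (indepFun_iff_map_prod_eq_prod_map_map hf.aemeasurable hg.aemeasurable).mp hfg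
  have hint : Integrable (fun p : S × S => k p.1 p.2) ((P.map f).prod (P.map g)) := by
    have : IsProbabilityMeasure (P.map f) := Measure.isProbabilityMeasure_map hf.aemeasurable
    have : IsProbabilityMeasure (P.map g) := Measure.isProbabilityMeasure_map hg.aemeasurable
    refine (integrable_const M).mono' hk_meas.aestronglyMeasurable
      (Filter.Eventually.of_forall fun p => ?_)
    simpa using hM p.1 p.2
  calc ∫ ω, k (f ω) (g ω) ∂P
      = ∫ p, k p.1 p.2 ∂(P.map (fun ω => (f ω, g ω))) := by
        rw [integral_map (hf.prodMk hg).aemeasurable hk_meas.aestronglyMeasurable]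
    _ = ∫ p, k p.1 p.2 ∂((P.map f).prod (P.map g)) := by rw [hmap]
    _ = ∫ x, ∫ y, k x y ∂(P.map g) ∂(P.map f) := integral_prod _ hint

theorem stmt_10 {Ω S : Type*} [MeasurableSpace Ω] [MeasurableSpace S]
    (P : Measure Ω) [IsProbabilityMeasure P]
    (k : S → S → ℝ) (hk_meas : Measurable fun p : S × S => k p.1 p.2)
    (hk_bdd : ∃ M : ℝ, ∀ x y, |k x y| ≤ M)
    (hk_symm : ∀ x y, k x y = k y x)
    (m n : ℕ) (hm : 2 ≤ m) (hn : 2 ≤ n)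
    (μ ν : Measure S) [IsProbabilityMeasure μ] [IsProbabilityMeasure ν]
    (X : Fin m → Ω → S) (Y : Fin n → Ω → S)
    (hX : ∀ i, Measurable (X i) ∧ Measure.map (X i) P = μ)
    (hY : ∀ j, Measurable (Y j) ∧ Measure.map (Y j) P = ν)
    (hindep : iIndepFun (Sum.elim X Y) P) :
    ∫ ω, ((1 / ((m : ℝ) * ((m : ℝ) - 1))) *
        ∑ p ∈ (Finset.univ : Finset (Fin m)).offDiag, k (X p.1 ω) (X p.2 ω)
      + (1 / ((n : ℝ) * ((n : ℝ) - 1))) *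
        ∑ p ∈ (Finset.univ : Finset (Fin n)).offDiag, k (Y p.1 ω) (Y p.2 ω)
      - (2 / ((m : ℝ) * (n : ℝ))) * ∑ i : Fin m, ∑ j : Fin n, k (X i ω) (Y j ω)) ∂P
    = (∫ x, ∫ x', k x x' ∂μ ∂μ) + (∫ y, ∫ y', k y y' ∂ν ∂ν)
      - 2 * ∫ x, ∫ y, k x y ∂ν ∂μ := by
  obtain ⟨M, hM⟩ := hk_bdd
  -- independence facts
  have hXX : ∀ i i' : Fin m, i ≠ i' → IndepFun (X i) (X i') P := fun i i' h =>
    hindep.indepFun (i := Sum.inl i) (j := Sum.inl i') (by simpa using h)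
  have hYY : ∀ j j' : Fin n, j ≠ j' → IndepFun (Y j) (Y j') P := fun j j' h =>
    hindep.indepFun (i := Sum.inr j) (j := Sum.inr j') (by simpa using h)
  have hXY : ∀ (i : Fin m) (j : Fin n), IndepFun (X i) (Y j) P := fun i j =>
    hindep.indepFun (i := Sum.inl i) (j := Sum.inr j) (by simp)
  set A := ∫ x, ∫ x', k x x' ∂μ ∂μ with hA
  set B := ∫ y, ∫ y', k y y' ∂ν ∂ν with hB
  set C := ∫ x, ∫ y, k x y ∂ν ∂μ with hC
  have hintX : ∀ p ∈ (Finset.univ : Finset (Fin m)).offDiag,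
      Integrable (fun ω => k (X p.1 ω) (X p.2 ω)) P := fun p _ =>
    key_int P k hk_meas M hM (hX p.1).1 (hX p.2).1
  have hintY : ∀ p ∈ (Finset.univ : Finset (Fin n)).offDiag,
      Integrable (fun ω => k (Y p.1 ω) (Y p.2 ω)) P := fun p _ =>
    key_int P k hk_meas M hM (hY p.1).1 (hY p.2).1
  have hintXY : ∀ (i : Fin m) (j : Fin n),
      Integrable (fun ω => k (X i ω) (Y j ω)) P := fun i j =>
    key_int P k hk_meas M hM (hX i).1 (hY j).1
  have hEX : ∀ p ∈ (Finset.univ : Finset (Fin m)).offDiag,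
      ∫ ω, k (X p.1 ω) (X p.2 ω) ∂P = A := by
    intro p hp
    rw [key_eq P k hk_meas M hM (hX p.1).1 (hX p.2).1
      (hXX p.1 p.2 (Finset.mem_offDiag.mp hp).2.2), (hX p.1).2, (hX p.2).2]
  have hEY : ∀ p ∈ (Finset.univ : Finset (Fin n)).offDiag,
      ∫ ω, k (Y p.1 ω) (Y p.2 ω) ∂P = B := by
    intro p hp
    rw [key_eq P k hk_meas M hM (hY p.1).1 (hY p.2).1
      (hYY p.1 p.2 (Finset.mem_offDiag.mp hp).2.2), (hY p.1).2, (hY p.2).2]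
  have hEXY : ∀ (i : Fin m) (j : Fin n), ∫ ω, k (X i ω) (Y j ω) ∂P = C := by
    intro i j
    rw [key_eq P k hk_meas M hM (hX i).1 (hY j).1 (hXY i j), (hX i).2, (hY j).2]
  have hI1 : Integrable (fun ω => ∑ p ∈ (Finset.univ : Finset (Fin m)).offDiag,
      k (X p.1 ω) (X p.2 ω)) P := integrable_finset_sum _ hintX
  have hI2 : Integrable (fun ω => ∑ p ∈ (Finset.univ : Finset (Fin n)).offDiag,
      k (Y p.1 ω) (Y p.2 ω)) P := integrable_finset_sum _ hintY
  have hI3 : Integrable (fun ω => ∑ i : Fin m, ∑ j : Fin n, k (X i ω) (Y j ω)) P :=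
    integrable_finset_sum _ fun i _ => integrable_finset_sum _ fun j _ => hintXY i j
  have hJ1 : Integrable (fun ω => (1 / ((m : ℝ) * ((m : ℝ) - 1))) *
      ∑ p ∈ (Finset.univ : Finset (Fin m)).offDiag, k (X p.1 ω) (X p.2 ω)) P :=
    hI1.const_mul _
  have hJ2 : Integrable (fun ω => (1 / ((n : ℝ) * ((n : ℝ) - 1))) *
      ∑ p ∈ (Finset.univ : Finset (Fin n)).offDiag, k (Y p.1 ω) (Y p.2 ω)) P :=
    hI2.const_mul _
  have hJ12 : Integrable (fun ω => (1 / ((m : ℝ) * ((m : ℝ) - 1))) *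
      (∑ p ∈ (Finset.univ : Finset (Fin m)).offDiag, k (X p.1 ω) (X p.2 ω))
      + (1 / ((n : ℝ) * ((n : ℝ) - 1))) *
      ∑ p ∈ (Finset.univ : Finset (Fin n)).offDiag, k (Y p.1 ω) (Y p.2 ω)) P := hJ1.add hJ2
  have hJ3 : Integrable (fun ω => (2 / ((m : ℝ) * (n : ℝ))) *
      ∑ i : Fin m, ∑ j : Fin n, k (X i ω) (Y j ω)) P := hI3.const_mul _
  rw [integral_sub hJ12 hJ3,
    integral_add hJ1 hJ2,
    integral_const_mul, integral_const_mul, integral_const_mul,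
    integral_finset_sum _ hintX, integral_finset_sum _ hintY,
    integral_finset_sum _ fun i _ => integrable_finset_sum _ fun j _ => hintXY i j]
  rw [Finset.sum_congr rfl hEX, Finset.sum_congr rfl hEY]
  have hsum3 : ∑ i : Fin m, ∫ ω, ∑ j : Fin n, k (X i ω) (Y j ω) ∂P
      = (m * n : ℕ) • C := by
    rw [show (m * n : ℕ) • C = ∑ _i : Fin m, ∑ _j : Fin n, C by
      simp [Finset.sum_const, mul_smul]]
    refine Finset.sum_congr rfl fun i _ => ?_
    rw [integral_finset_sum _ fun j _ => hintXY i j]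
    exact Finset.sum_congr rfl fun j _ => hEXY i j
  rw [hsum3, Finset.sum_const, Finset.sum_const, Finset.offDiag_card, Finset.offDiag_card]
  simp only [Finset.card_univ, Fintype.card_fin, nsmul_eq_mul]
  have hmm : ((m * m - m : ℕ) : ℝ) = (m : ℝ) * ((m : ℝ) - 1) := by
    have h : m ≤ m * m := Nat.le_mul_of_pos_left _ (by omega)
    push_cast [Nat.cast_sub h]
    ring
  have hnn : ((n * n - n : ℕ) : ℝ) = (n : ℝ) * ((n : ℝ) - 1) := by
    have h : n ≤ n * n := Nat.le_mul_of_pos_left _ (by omega)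
    push_cast [Nat.cast_sub h]
    ring
  have hm0 : (m : ℝ) ≠ 0 := by positivity
  have hm1 : (m : ℝ) - 1 ≠ 0 := by
    have : (2 : ℝ) ≤ (m : ℝ) := by exact_mod_cast hm
    linarith
  have hn0 : (n : ℝ) ≠ 0 := by positivity
  have hn1 : (n : ℝ) - 1 ≠ 0 := by
    have : (2 : ℝ) ≤ (n : ℝ) := by exact_mod_cast hn
    linarith
  rw [hmm, hnn]
  push_cast
  field_simp
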